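/- Let H be a Hilbert space, x, y, z ∈ H with ‖x‖ ≤ R, and suppose ‖x − y‖² ≤ R² − δ², ‖x − z‖² ≤ R² − δ², and |⟨y, z⟩| ≤ ε with 4ε ≤ δ². Then ‖x − (y + z)‖² ≤ R² − 3δ²/2. -/

import Mathlib

/-- Quantitative doubling step: if `‖x‖ = R`, `‖x − y‖² ≤ R² − δ²`,
`‖x − z‖² ≤ R² − δ²`, `|⟨y, z⟩| ≤ ε` and `4ε ≤ δ²`, then
`‖x − (y + z)‖² ≤ R² − 3δ²/2`. -/
theorem doubling_step
    {H : Type*} [NormedAddCommGroup H] [InnerProductSpace ℂ H]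
    (x y z : H) (R δ ε : ℝ)
    (hx : ‖x‖ = R)
    (hy : ‖x - y‖ ^ 2 ≤ R ^ 2 - δ ^ 2)
    (hz : ‖x - z‖ ^ 2 ≤ R ^ 2 - δ ^ 2)
    (hyz : ‖(inner ℂ y z : ℂ)‖ ≤ ε)
    (hεδ : 4 * ε ≤ δ ^ 2) :
    ‖x - (y + z)‖ ^ 2 ≤ R ^ 2 - 3 * δ ^ 2 / 2 := by
  have a := norm_sub_sq (𝕜 := ℂ) x (y + z)
  have b := norm_sub_sq (𝕜 := ℂ) x y
  have c := norm_sub_sq (𝕜 := ℂ) x z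
  have d := norm_add_sq (𝕜 := ℂ) y z
  simp only [inner_add_right, map_add] at a
  have hre : RCLike.re (inner ℂ y z : ℂ) ≤ ε :=
    le_trans (le_trans (le_abs_self _) (RCLike.abs_re_le_norm _)) hyz
  have hx2 : ‖x‖ ^ 2 = R ^ 2 := by rw [hx]
  linarith
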